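/- Let V₁ and V₂ be metrizable locally convex topological vector spaces, f : V₁ → V₂ a continuous linear map with dense image, O an open subset of V₂, and Õ = f⁻¹(O). Then the restriction f|_Õ : Õ → O is a homotopy equivalence. -/

import Mathlib

open Set Metric Function

/-- Palais: Let `V₁, V₂` be metrizable locally convex topological vector
spaces, `f : V₁ → V₂` a continuous linear map with dense image, `O ⊆ V₂` open and
`Õ = f⁻¹(O)`.  Then the restriction `f|_Õ : Õ → O` is a homotopy equivalence. -/
theorem palais_dense_linear_homotopyEquiv
    (V₁ V₂ : Type*)
    [AddCommGroup V₁] [Module ℝ V₁] [TopologicalSpace V₁] [IsTopologicalAddGroup V₁]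
    [ContinuousSMul ℝ V₁] [LocallyConvexSpace ℝ V₁] [TopologicalSpace.MetrizableSpace V₁]
    [AddCommGroup V₂] [Module ℝ V₂] [TopologicalSpace V₂] [IsTopologicalAddGroup V₂]
    [ContinuousSMul ℝ V₂] [LocallyConvexSpace ℝ V₂] [TopologicalSpace.MetrizableSpace V₂]
    (f : V₁ →L[ℝ] V₂) (hdense : DenseRange f)
    (O : Set V₂) (hO : IsOpen O) :
    ∃ e : ContinuousMap.HomotopyEquiv (f ⁻¹' O) O,
      ∀ x : (f ⁻¹' O : Set V₁), ((e.toFun x : O) : V₂) = f x := by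
  classical
  letI : MetricSpace V₂ := TopologicalSpace.metrizableSpaceMetric V₂
  -- choose a convex open neighborhood `C i ⊆ O` of each point `i ∈ O`
  have hC : ∀ i : O, ∃ C : Set V₂, Convex ℝ C ∧ IsOpen C ∧ (i : V₂) ∈ C ∧ C ⊆ O := by
    intro i
    obtain ⟨S, ⟨hS_mem, hS_conv⟩, hS_sub⟩ :=
      (LocallyConvexSpace.convex_basis (𝕜 := ℝ) (i : V₂)).mem_iff.mp (hO.mem_nhds i.2)
    exact ⟨interior S, hS_conv.interior, isOpen_interior,
      mem_interior_iff_mem_nhds.mpr hS_mem, interior_subset.trans hS_sub⟩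
  choose C hCconv hCopen hCmem hCsub using hC
  -- choose radii `r i` so that `ball i (3 * r i) ⊆ C i`
  have hr : ∀ i : O, ∃ ρ : ℝ, 0 < ρ ∧ Metric.ball (i : V₂) (3 * ρ) ⊆ C i := by
    intro i
    obtain ⟨ε, hε, hball⟩ := Metric.isOpen_iff.mp (hCopen i) _ (hCmem i)
    exact ⟨ε / 4, by linarith,
      (Metric.ball_subset_ball (by linarith)).trans hball⟩
  choose r hrpos hrball using hr
  -- choose points of the image of `f` in each ball
  have hpex : ∀ i : O, ∃ x : V₁, f x ∈ Metric.ball (i : V₂) (r i) :=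
    fun i => hdense.exists_mem_open Metric.isOpen_ball ⟨i, Metric.mem_ball_self (hrpos i)⟩
  choose p hp using hpex
  -- a partition of unity on `O` subordinate to the balls
  haveI : ParacompactSpace O := by
    letI : MetricSpace O := TopologicalSpace.metrizableSpaceMetric O
    infer_instance
  haveI : NormalSpace O := by
    letI : MetricSpace O := TopologicalSpace.metrizableSpaceMetric O
    infer_instance
  set W : O → Set O := fun i => (Subtype.val ⁻¹' Metric.ball (i : V₂) (r i) : Set O) with hW
  have hWopen : ∀ i, IsOpen (W i) := fun i => Metric.isOpen_ball.preimage continuous_subtype_val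
  have hWcover : (univ : Set O) ⊆ ⋃ i, W i := fun y _ =>
    mem_iUnion.mpr ⟨y, Metric.mem_ball_self (hrpos y)⟩
  obtain ⟨φ, hφ⟩ := PartitionOfUnity.exists_isSubordinate isClosed_univ W hWopen hWcover
  -- the approximate inverse `g`
  set g : O → V₁ := fun y => ∑ᶠ i, φ i y • p i with hg
  have hg_cont : Continuous g :=
    φ.continuous_finsum_smul fun i x _ => continuousAt_const
  -- the key estimate: `y` and `f (g y)` lie in a common convex subset of `O`
  have key : ∀ y : O, ∃ i₀ : O, (y : V₂) ∈ C i₀ ∧ f (g y) ∈ C i₀ := by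
    intro y
    have hS : (φ.finsupport y).Nonempty := by
      rcases Finset.eq_empty_or_nonempty (φ.finsupport y) with h | h
      · exfalso
        have h1 := φ.sum_finsupport (mem_univ y)
        rw [h] at h1
        simp at h1
      · exact h
    obtain ⟨i₀, hi₀S, hi₀max⟩ := (φ.finsupport y).exists_max_image r hS
    have hmemW : ∀ j ∈ φ.finsupport y, (y : V₂) ∈ Metric.ball (j : V₂) (r j) := by
      intro j hj
      have hne : φ j y ≠ 0 := by rwa [φ.mem_finsupport, mem_support] at hj
      exact hφ j (subset_tsupport _ hne)
    have hyball : (y : V₂) ∈ Metric.ball (i₀ : V₂) (r i₀) := hmemW i₀ hi₀S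
    refine ⟨i₀, hrball i₀ (Metric.ball_subset_ball (by linarith [hrpos i₀]) hyball), ?_⟩
    have hfin : (support fun i : O => φ i y • p i).Finite :=
      (φ.locallyFinite.point_finite y).subset (support_smul_subset_left _ _)
    have hfg : f (g y) = ∑ᶠ i, φ i y • f (p i) := by
      rw [hg]
      rw [show (f : V₁ → V₂) = (f.toLinearMap.toAddMonoidHom : V₁ → V₂) from rfl]
      rw [AddMonoidHom.map_finsum _ hfin]
      simp
    rw [hfg]
    refine (hCconv i₀).finsum_mem (fun i => φ.nonneg i y) (φ.sum_eq_one (mem_univ y)) ?_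
    intro i hi
    have hiS : i ∈ φ.finsupport y := by rwa [φ.mem_finsupport, mem_support]
    have h1 : dist (f (p i)) (i : V₂) < r i := Metric.mem_ball.mp (hp i)
    have h2 : dist (y : V₂) (i : V₂) < r i := Metric.mem_ball.mp (hmemW i hiS)
    have h3 : dist (y : V₂) (i₀ : V₂) < r i₀ := Metric.mem_ball.mp hyball
    have h4 : r i ≤ r i₀ := hi₀max i hiS
    apply hrball i₀
    rw [Metric.mem_ball]
    calc dist (f (p i)) (i₀ : V₂)
        ≤ dist (f (p i)) (i : V₂) + dist (i : V₂) (y : V₂) + dist (y : V₂) (i₀ : V₂) :=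
          dist_triangle4 _ _ _ _
      _ < r i + r i + r i₀ := by rw [dist_comm (i : V₂)]; linarith
      _ ≤ 3 * r i₀ := by linarith
  choose i₀ hyC hfgC using key
  -- the segment between `f (g y)` and `y` stays in `O`
  have seg : ∀ (y : O) (t : ℝ), 0 ≤ t → t ≤ 1 → (1 - t) • f (g y) + t • (y : V₂) ∈ O :=
    fun y t ht0 ht1 =>
      hCsub (i₀ y) ((hCconv (i₀ y)) (hfgC y) (hyC y) (by linarith) ht0 (by ring))
  have hgO2 : ∀ y : O, g y ∈ f ⁻¹' O := by
    intro y
    have h := seg y 0 le_rfl zero_le_one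
    simpa using h
  -- the two continuous maps
  set F : C(↥(f ⁻¹' O), ↥O) :=
    ⟨fun x => ⟨f x, x.2⟩, Continuous.subtype_mk (f.continuous.comp continuous_subtype_val) _⟩
      with hF
  set G : C(↥O, ↥(f ⁻¹' O)) := ⟨fun y => ⟨g y, hgO2 y⟩, Continuous.subtype_mk hg_cont _⟩ with hG
  -- homotopy `F ∘ G ≃ id O`
  have contT : Continuous fun q : unitInterval × O => (q.1 : ℝ) :=
    continuous_induced_dom.comp continuous_fst
  have Hfg : (F.comp G).Homotopic (ContinuousMap.id O) := by
    have contH : Continuous fun q : unitInterval × O =>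
        (1 - (q.1 : ℝ)) • f (g q.2) + (q.1 : ℝ) • (q.2 : V₂) :=
      ((continuous_const.sub contT).smul
        ((f.continuous.comp hg_cont).comp continuous_snd)).add
        (contT.smul (continuous_subtype_val.comp continuous_snd))
    refine ⟨⟨⟨fun q => ⟨(1 - (q.1 : ℝ)) • f (g q.2) + (q.1 : ℝ) • (q.2 : V₂),
      seg q.2 q.1 q.1.2.1 q.1.2.2⟩, contH.subtype_mk _⟩, ?_, ?_⟩⟩
    · intro y
      apply Subtype.ext
      simp [hF, hG]
    · intro y
      apply Subtype.ext
      simp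
  -- homotopy `G ∘ F ≃ id Õ`
  have Kfg : (G.comp F).Homotopic (ContinuousMap.id ↥(f ⁻¹' O)) := by
    have contK : Continuous fun q : unitInterval × ↥(f ⁻¹' O) =>
        (1 - (q.1 : ℝ)) • g (F q.2) + (q.1 : ℝ) • (q.2 : V₁) := by
      have contT' : Continuous fun q : unitInterval × ↥(f ⁻¹' O) => (q.1 : ℝ) :=
        continuous_induced_dom.comp continuous_fst
      exact ((continuous_const.sub contT').smul
        ((hg_cont.comp F.continuous).comp continuous_snd)).add
        (contT'.smul (continuous_subtype_val.comp continuous_snd))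
    have hmem : ∀ q : unitInterval × ↥(f ⁻¹' O),
        (1 - (q.1 : ℝ)) • g (F q.2) + (q.1 : ℝ) • (q.2 : V₁) ∈ f ⁻¹' O := by
      intro q
      have h := seg (F q.2) q.1 q.1.2.1 q.1.2.2
      simp only [mem_preimage, map_add, map_smul]
      exact h
    refine ⟨⟨⟨fun q => ⟨(1 - (q.1 : ℝ)) • g (F q.2) + (q.1 : ℝ) • (q.2 : V₁), hmem q⟩,
      contK.subtype_mk _⟩, ?_, ?_⟩⟩
    · intro x
      apply Subtype.ext
      simp [hF, hG]
    · intro x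
      apply Subtype.ext
      simp
  exact ⟨⟨F, G, Kfg, Hfg⟩, fun x => rfl⟩
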